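/- Let n ≥ 2 be a natural number and let ζ be a primitive n-th root of unity in ℂ. Then ∑_{k=1}^{n-1} 1/((1-ζ^k)(1-ζ^{-k})) = (n^2-1)/12. -/

import Mathlib

open Finset

lemma aux_sum_mul_pow (n : ℕ) (x : ℂ) (hx : x ≠ 1) (hxn : x ^ n = 1) :
    ∑ j ∈ range n, (j : ℂ) * x ^ j = n / (x - 1) := by
  have hx1 : x - 1 ≠ 0 := sub_ne_zero.mpr hx
  have h0 : ∑ j ∈ range n, x ^ j = 0 := by
    rw [geom_sum_eq hx, hxn, sub_self, zero_div]
  rw [eq_div_iff hx1]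
  have h1 : ∀ j ∈ range n, ((j : ℂ) * x ^ j) * (x - 1)
      = ((((j+1 : ℕ)) : ℂ) * x ^ (j+1) - (j:ℂ) * x ^ j) - x ^ (j+1) := by
    intro j _; push_cast; ring
  rw [Finset.sum_mul, Finset.sum_congr rfl h1, Finset.sum_sub_distrib,
    Finset.sum_range_sub (fun j => (j:ℂ) * x ^ j)]
  have h2 : ∑ j ∈ range n, x ^ (j+1) = x * ∑ j ∈ range n, x ^ j := by
    rw [Finset.mul_sum]; exact Finset.sum_congr rfl (fun j _ => by ring)
  rw [h2, h0, hxn]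
  simp

lemma aux_orth (n : ℕ) (hn1 : 1 ≤ n) (y : ℂ) (hy : y ≠ 1) (hyn : y ^ n = 1) :
    ∑ k ∈ Icc 1 (n-1), y ^ k = -1 := by
  have h0 : ∑ k ∈ range n, y ^ k = 0 := by
    rw [geom_sum_eq hy, hyn, sub_self, zero_div]
  have hr : range n = insert 0 (Icc 1 (n-1)) := by
    ext k; simp [Finset.mem_insert, Finset.mem_Icc]; omega
  rw [hr, Finset.sum_insert (by simp)] at h0
  simp only [pow_zero] at h0
  linear_combination h0

lemma aux_gauss1 (n : ℕ) : (∑ j ∈ range n, (j : ℂ)) * 2 = (n:ℂ) * ((n:ℂ) - 1) := by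
  induction n with
  | zero => simp
  | succ m ih => rw [Finset.sum_range_succ, add_mul, ih]; push_cast; ring

lemma aux_gauss2 (n : ℕ) : (∑ j ∈ range n, (j : ℂ)^2) * 6
    = (n:ℂ) * ((n:ℂ) - 1) * (2*(n:ℂ) - 1) := by
  induction n with
  | zero => simp
  | succ m ih => rw [Finset.sum_range_succ, add_mul, ih]; push_cast; ring

/-- Let `n ≥ 2` and `ζ` be a primitive `n`-th root of unity in `ℂ`.
Then `∑_{k=1}^{n-1} 1/((1-ζ^k)(1-ζ^{-k})) = (n^2-1)/12`. -/
theorem sum_inv_one_sub_primitiveRoot_inv (n : ℕ) (hn : 2 ≤ n) (ζ : ℂ)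
    (hζ : IsPrimitiveRoot ζ n) :
    ∑ k ∈ Finset.Icc 1 (n - 1), 1 / ((1 - ζ ^ k) * (1 - ζ ^ (-(k : ℤ))))
      = ((n : ℂ) ^ 2 - 1) / 12 := by
  have hn0 : (n:ℂ) ≠ 0 := Nat.cast_ne_zero.mpr (by omega)
  have hζ0 : ζ ≠ 0 := hζ.ne_zero (by omega)
  -- Step 1: rewrite each term as a double sum
  have step1 : ∀ k ∈ Icc 1 (n-1),
      1 / ((1 - ζ ^ k) * (1 - ζ ^ (-(k : ℤ))))
      = (1/(n:ℂ)^2) * ∑ j ∈ range n, ∑ i ∈ range n,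
          (i:ℂ) * (j:ℂ) * (ζ ^ ((j:ℤ) - (i:ℤ)))^k := by
    intro k hk
    rw [Finset.mem_Icc] at hk
    obtain ⟨hk1, hk2⟩ := hk
    set x := ζ ^ k with hxdef
    have hx0 : x ≠ 0 := pow_ne_zero _ hζ0
    have hx : x ≠ 1 := hζ.pow_ne_one_of_pos_of_lt (by omega) (by omega)
    have hxn : x ^ n = 1 := by rw [hxdef, ← pow_mul, mul_comm, pow_mul, hζ.pow_eq_one, one_pow]
    have hxi : x⁻¹ ≠ 1 := by rwa [ne_eq, inv_eq_one]
    have hxin : (x⁻¹) ^ n = 1 := by rw [inv_pow, hxn, inv_one]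
    have hneg : ζ ^ (-(k:ℤ)) = x⁻¹ := by rw [zpow_neg, zpow_natCast]
    have hzx : ∀ i j : ℕ, (ζ ^ ((j:ℤ) - (i:ℤ)))^k = x ^ j * (x⁻¹) ^ i := by
      intro i j
      rw [← zpow_natCast (ζ ^ ((j:ℤ) - (i:ℤ))) k, ← zpow_mul, sub_mul, zpow_sub₀ hζ0,
        show (j:ℤ)*k = ((k*j : ℕ) : ℤ) by push_cast; ring,
        show (i:ℤ)*k = ((k*i : ℕ) : ℤ) by push_cast; ring,
        zpow_natCast, zpow_natCast, pow_mul, pow_mul, ← hxdef,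
        div_eq_mul_inv, ← inv_pow]
    have hA := aux_sum_mul_pow n x hx hxn
    have hB := aux_sum_mul_pow n x⁻¹ hxi hxin
    have hexp : ∑ j ∈ range n, ∑ i ∈ range n,
        (i:ℂ) * (j:ℂ) * (ζ ^ ((j:ℤ) - (i:ℤ)))^k
        = (∑ j ∈ range n, (j:ℂ) * x ^ j) * (∑ i ∈ range n, (i:ℂ) * (x⁻¹) ^ i) := by
      rw [Finset.sum_mul_sum]
      refine Finset.sum_congr rfl fun j _ => Finset.sum_congr rfl fun i _ => ?_
      rw [hzx i j]; ring
    rw [hneg, hexp, hA, hB]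
    have h1 : x - 1 ≠ 0 := sub_ne_zero.mpr hx
    have h2 : x⁻¹ - 1 ≠ 0 := sub_ne_zero.mpr hxi
    have h3 : (1:ℂ) - x ≠ 0 := sub_ne_zero.mpr (Ne.symm hx)
    have h4 : (1:ℂ) - x⁻¹ ≠ 0 := sub_ne_zero.mpr (Ne.symm hxi)
    clear_value x
    field_simp
  rw [Finset.sum_congr rfl step1, ← Finset.mul_sum]
  -- Step 2: swap the sums
  rw [Finset.sum_comm]
  have swap2 : ∀ j ∈ range n, ∑ k ∈ Icc 1 (n-1), ∑ i ∈ range n,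
        (i:ℂ) * (j:ℂ) * (ζ ^ ((j:ℤ) - (i:ℤ)))^k
      = ∑ i ∈ range n, ∑ k ∈ Icc 1 (n-1),
        (i:ℂ) * (j:ℂ) * (ζ ^ ((j:ℤ) - (i:ℤ)))^k :=
    fun j _ => Finset.sum_comm
  rw [Finset.sum_congr rfl swap2]
  -- Step 3: evaluate the inner sum over k by orthogonality
  have step3 : ∀ j ∈ range n, ∀ i ∈ range n,
      ∑ k ∈ Icc 1 (n-1), (i:ℂ) * (j:ℂ) * (ζ ^ ((j:ℤ) - (i:ℤ)))^k
      = (i:ℂ) * (j:ℂ) * ((if i = j then (n:ℂ) else 0) - 1) := by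
    intro j hj i hi
    rw [Finset.mem_range] at hj hi
    rw [← Finset.mul_sum]
    by_cases hij : i = j
    · subst hij
      have hc : ∑ k ∈ Icc 1 (n-1), (ζ ^ ((i:ℤ) - (i:ℤ))) ^ k = (n:ℂ) - 1 := by
        simp only [sub_self, zpow_zero, one_pow, Finset.sum_const, Nat.card_Icc,
          nsmul_eq_mul, mul_one]
        have h5 : n - 1 + 1 - 1 = n - 1 := by omega
        rw [h5, Nat.cast_sub (by omega : 1 ≤ n)]; simp
      rw [hc, if_pos rfl]
    · have hy1 : ζ ^ ((j:ℤ) - (i:ℤ)) ≠ 1 := by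
        intro h
        rw [hζ.zpow_eq_one_iff_dvd] at h
        have h0 : (j:ℤ) - (i:ℤ) = 0 :=
          Int.eq_zero_of_dvd_of_natAbs_lt_natAbs h (by omega)
        omega
      have hyn : (ζ ^ ((j:ℤ) - (i:ℤ))) ^ n = 1 := by
        rw [← zpow_natCast (ζ ^ ((j:ℤ) - (i:ℤ))) n, ← zpow_mul, mul_comm, zpow_mul,
          zpow_natCast, hζ.pow_eq_one, one_zpow]
      rw [aux_orth n (by omega) _ hy1 hyn, if_neg hij]
      ring
  rw [Finset.sum_congr rfl (fun j hj => Finset.sum_congr rfl (step3 j hj))]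
  -- Step 4: evaluate the resulting double sum
  have step4 : ∀ j ∈ range n, ∑ i ∈ range n,
      (i:ℂ) * (j:ℂ) * ((if i = j then (n:ℂ) else 0) - 1)
      = (n:ℂ) * (j:ℂ)^2 - (j:ℂ) * ∑ i ∈ range n, (i:ℂ) := by
    intro j hj
    have h1 : ∑ i ∈ range n, (i:ℂ) * (j:ℂ) * ((if i = j then (n:ℂ) else 0) - 1)
        = (∑ i ∈ range n, if i = j then (i:ℂ) * (j:ℂ) * (n:ℂ) else 0)
          - ∑ i ∈ range n, (i:ℂ) * (j:ℂ) := by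
      rw [← Finset.sum_sub_distrib]
      refine Finset.sum_congr rfl fun i _ => ?_
      by_cases hij : i = j
      · simp [hij]; ring
      · simp [hij]
    rw [h1, Finset.sum_ite_eq' (range n) j (fun i => (i:ℂ) * (j:ℂ) * (n:ℂ)), if_pos hj,
      ← Finset.sum_mul]
    ring
  rw [Finset.sum_congr rfl step4, Finset.sum_sub_distrib, ← Finset.mul_sum, ← Finset.sum_mul]
  -- Step 5: Gauss sums and final algebra
  have hP : ∑ j ∈ range n, (j:ℂ) = (n:ℂ) * ((n:ℂ) - 1) / 2 := by
    linear_combination (aux_gauss1 n) / 2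
  have hQ : ∑ j ∈ range n, (j:ℂ)^2 = (n:ℂ) * ((n:ℂ) - 1) * (2*(n:ℂ) - 1) / 6 := by
    linear_combination (aux_gauss2 n) / 6
  rw [hP, hQ]
  field_simp
  ring
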